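/- Assume μ_{k,0}(θ°) > 0 for at least one agent k and that the self-awareness weights satisfy liminf_{i→∞} γ_{k,i} > 0 for every agent k. Then every self-aware agent develops correct forecasting: for every agent k and every ζ ∈ Z_k, m_{k,i}(ζ) → L_k(ζ|θ°) almost surely as i → ∞. -/

import Mathlib

open MeasureTheory ProbabilityTheory Filter Matrix


/-- `x - 1 - log x ≥ (x-1)^2/(2 max 1 x)` for `x > 0`. -/
lemma aux_h_bound {x : ℝ} (hx : 0 < x) :
    (x - 1)^2 / (2 * max 1 x) ≤ x - 1 - Real.log x := by
  rcases le_total 1 x with h1 | h1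
  · rw [max_eq_right h1]
    set f : ℝ → ℝ := fun y => y - 1 - Real.log y - (y - 1)^2 / (2 * y) with hf
    have key : ∀ y : ℝ, 0 < y → HasDerivAt f ((y-1)^2/(2*y^2)) y := by
      intro y hy0
      have h1' : HasDerivAt (fun y : ℝ => y - 1 - Real.log y) (1 - 1/y) y := by
        rw [one_div]; exact ((hasDerivAt_id' (x := y)).sub_const 1).sub (Real.hasDerivAt_log hy0.ne')
      have h2' := (((hasDerivAt_id' (x := y)).sub_const 1).pow 2).div
          ((hasDerivAt_id' (x := y)).const_mul 2) (mul_pos two_pos hy0).ne'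
      have h3 : HasDerivAt f _ y := h1'.sub h2'
      convert h3 using 1
      simp only [Pi.pow_apply]
      field_simp
      ring
    have mono : MonotoneOn f (Set.Ici 1) := by
      apply monotoneOn_of_deriv_nonneg (convex_Ici 1)
      · intro y hy
        exact ((key y (lt_of_lt_of_le one_pos hy)).differentiableAt.continuousAt).continuousWithinAt
      · intro y hy
        rw [interior_Ici] at hy
        exact ((key y (lt_trans one_pos hy)).differentiableAt).differentiableWithinAt
      · intro y hy
        rw [interior_Ici] at hy
        rw [(key y (lt_trans one_pos hy)).deriv]
        positivity
    have h0 : f 1 ≤ f x := mono (Set.mem_Ici.2 le_rfl) (Set.mem_Ici.2 h1) h1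
    simp only [hf, Real.log_one] at h0
    nlinarith [h0]
  · rw [max_eq_left h1]
    set f : ℝ → ℝ := fun y => y - 1 - Real.log y - (y - 1)^2 / 2 with hf
    have key : ∀ y : ℝ, 0 < y → HasDerivAt f (-((y-1)^2/y)) y := by
      intro y hy0
      have h1' : HasDerivAt (fun y : ℝ => y - 1 - Real.log y) (1 - 1/y) y := by
        rw [one_div]; exact ((hasDerivAt_id' (x := y)).sub_const 1).sub (Real.hasDerivAt_log hy0.ne')
      have h2' := (((hasDerivAt_id' (x := y)).sub_const 1).pow 2).div_const 2
      have h3 : HasDerivAt f _ y := h1'.sub h2'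
      convert h3 using 1
      field_simp
      ring
    have mono : AntitoneOn f (Set.Ioc 0 1) := by
      apply antitoneOn_of_deriv_nonpos (convex_Ioc 0 1)
      · intro y hy
        exact ((key y hy.1).differentiableAt.continuousAt).continuousWithinAt
      · intro y hy
        rw [interior_Ioc] at hy
        exact ((key y hy.1).differentiableAt).differentiableWithinAt
      · intro y hy
        rw [interior_Ioc] at hy
        rw [(key y hy.1).deriv]
        have hy0 : (0:ℝ) < y := hy.1
        have : (0:ℝ) ≤ (y-1)^2 / y := by positivity
        linarith
    have h0 : f 1 ≤ f x := mono (Set.mem_Ioc.2 ⟨hx, h1⟩) (Set.mem_Ioc.2 ⟨one_pos, le_rfl⟩) h1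
    simp only [hf, Real.log_one] at h0
    nlinarith [h0]


lemma aux_kl_eq {ι : Type*} [Fintype ι] (p q : ι → ℝ) (hp : ∀ i, 0 < p i) (hq : ∀ i, 0 < q i)
    (hps : ∑ i, p i = 1) (hqs : ∑ i, q i = 1) :
    ∑ i, p i * Real.log (p i / q i)
      = ∑ i, p i * (q i / p i - 1 - Real.log (q i / p i)) := by
  have key : ∀ i, p i * (q i / p i - 1 - Real.log (q i / p i))
      = p i * Real.log (p i / q i) + q i - p i := by
    intro i
    have hpne := (hp i).ne'
    have hqne := (hq i).ne'
    have h1 : Real.log (q i / p i) = - Real.log (p i / q i) := by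
      rw [← Real.log_inv, inv_div]
    rw [h1]
    field_simp
    ring
  rw [Finset.sum_congr rfl (fun i _ => key i), Finset.sum_sub_distrib,
    Finset.sum_add_distrib, hps, hqs]
  ring

lemma aux_kl_nonneg {ι : Type*} [Fintype ι] (p q : ι → ℝ) (hp : ∀ i, 0 < p i)
    (hq : ∀ i, 0 < q i) (hps : ∑ i, p i = 1) (hqs : ∑ i, q i = 1) :
    0 ≤ ∑ i, p i * Real.log (p i / q i) := by
  rw [aux_kl_eq p q hp hq hps hqs]
  apply Finset.sum_nonneg
  intro i _
  have hx : 0 < q i / p i := div_pos (hq i) (hp i)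
  have := aux_h_bound hx
  have h2 : 0 ≤ (q i / p i - 1)^2 / (2 * max 1 (q i / p i)) := by positivity
  nlinarith [(hp i)]

lemma aux_kl_sq {ι : Type*} [Fintype ι] (p q : ι → ℝ) (hp : ∀ i, 0 < p i)
    (hq : ∀ i, 0 < q i) (hps : ∑ i, p i = 1) (hqs : ∑ i, q i = 1) (i0 : ι) :
    (q i0 - p i0)^2 / 2 ≤ ∑ i, p i * Real.log (p i / q i) := by
  rw [aux_kl_eq p q hp hq hps hqs]
  have hterm : ∀ i ∈ Finset.univ, (0:ℝ) ≤ p i * (q i / p i - 1 - Real.log (q i / p i)) := by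
    intro i _
    have hx : 0 < q i / p i := div_pos (hq i) (hp i)
    have := aux_h_bound hx
    have h2 : 0 ≤ (q i / p i - 1)^2 / (2 * max 1 (q i / p i)) := by positivity
    nlinarith [(hp i)]
  refine le_trans ?_ (Finset.single_le_sum hterm (Finset.mem_univ i0))
  have hp1 : p i0 ≤ 1 := by
    rw [← hps]; exact Finset.single_le_sum (fun i _ => (hp i).le) (Finset.mem_univ i0)
  have hq1 : q i0 ≤ 1 := by
    rw [← hqs]; exact Finset.single_le_sum (fun i _ => (hq i).le) (Finset.mem_univ i0)
  have hpne := (hp i0).ne'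
  have hqne := (hq i0).ne'
  have hx : 0 < q i0 / p i0 := div_pos (hq i0) (hp i0)
  have hb := aux_h_bound hx
  have key : (q i0 - p i0)^2 / 2 ≤ p i0 * ((q i0 / p i0 - 1)^2 / (2 * max 1 (q i0 / p i0))) := by
    rcases le_total (q i0 / p i0) 1 with h | h
    · rw [max_eq_left h]
      have hid : p i0 * ((q i0 / p i0 - 1)^2 / (2 * 1)) = (q i0 - p i0)^2 / (2 * p i0) := by
        field_simp
      rw [hid]
      exact div_le_div_of_nonneg_left (sq_nonneg _) (mul_pos two_pos (hp i0)) (by nlinarith)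
    · rw [max_eq_right h]
      have hid : p i0 * ((q i0 / p i0 - 1)^2 / (2 * (q i0 / p i0)))
          = (q i0 - p i0)^2 / (2 * q i0) := by
        field_simp
      rw [hid]
      exact div_le_div_of_nonneg_left (sq_nonneg _) (mul_pos two_pos (hq i0)) (by nlinarith)
  refine le_trans key ?_
  have := mul_le_mul_of_nonneg_left hb (hp i0).le
  linarith


/-- A primitive column-stochastic matrix has a positive right fixed vector. -/
lemma aux_perron {N : ℕ} (hN : 0 < N) (a : Fin N → Fin N → ℝ)
    (ha0 : ∀ l k, 0 ≤ a l k) (ha1 : ∀ k, ∑ l, a l k = 1)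
    (n : ℕ) (hpos : ∀ l k, 0 < ((Matrix.of a) ^ n) l k) :
    ∃ v : Fin N → ℝ, (∀ k, 0 < v k) ∧ ∀ l, ∑ k, a l k * v k = v l := by
  classical
  set M : Matrix (Fin N) (Fin N) ℝ := Matrix.of a with hM
  have hdetT : (Mᵀ - 1).det = 0 := by
    rw [← Matrix.exists_mulVec_eq_zero_iff]
    refine ⟨fun _ => 1, ?_, ?_⟩
    · intro h
      have := congrFun h ⟨0, hN⟩
      norm_num at this
    · funext k
      simp only [Matrix.sub_mulVec, Matrix.one_mulVec, Pi.sub_apply, Pi.zero_apply]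
      have h5 : (Mᵀ.mulVec fun _ => (1:ℝ)) k = ∑ l, a l k := by
        simp [Matrix.mulVec, dotProduct, Matrix.transpose_apply, hM]
      rw [h5, ha1 k]
      norm_num
  have hdet : (M - 1).det = 0 := by
    have h : (M - 1)ᵀ = Mᵀ - 1 := by rw [Matrix.transpose_sub, Matrix.transpose_one]
    rw [← Matrix.det_transpose, h, hdetT]
  obtain ⟨w, hw0, hww⟩ := (Matrix.exists_mulVec_eq_zero_iff).2 hdet
  have hMw : M.mulVec w = w := by
    rw [Matrix.sub_mulVec, Matrix.one_mulVec, sub_eq_zero] at hww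
    exact hww
  set v : Fin N → ℝ := fun k => |w k| with hv
  have hvnn : ∀ k, 0 ≤ v k := fun k => abs_nonneg _
  have hfix : M.mulVec v = v := by
    have hle : ∀ l, v l ≤ (M.mulVec v) l := by
      intro l
      have h1 : |(M.mulVec w) l| ≤ (M.mulVec v) l := by
        simp only [Matrix.mulVec, dotProduct]
        refine le_trans (Finset.abs_sum_le_sum_abs _ _) ?_
        apply Finset.sum_le_sum
        intro k _
        rw [abs_mul, abs_of_nonneg (show (0:ℝ) ≤ M l k from ha0 l k)]
      rw [hMw] at h1
      exact h1
    have hsum : ∑ l, ((M.mulVec v) l - v l) = 0 := by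
      have h2 : ∑ l, (M.mulVec v) l = ∑ k, v k := by
        simp only [Matrix.mulVec, dotProduct]
        rw [Finset.sum_comm]
        apply Finset.sum_congr rfl
        intro k _
        rw [← Finset.sum_mul]
        have h6 : ∑ l, M l k = 1 := by
          simp only [hM, Matrix.of_apply]
          exact ha1 k
        rw [h6, one_mul]
      rw [Finset.sum_sub_distrib, h2, sub_self]
    funext l
    have h3 := (Finset.sum_eq_zero_iff_of_nonneg
      (fun l _ => sub_nonneg.2 (hle l))).1 hsum l (Finset.mem_univ l)
    linarith [sub_eq_zero.1 h3]
  have hfixn : ∀ m, (M ^ m).mulVec v = v := by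
    intro m
    induction m with
    | zero => simp [Matrix.one_mulVec]
    | succ m ih =>
      rw [pow_succ, ← Matrix.mulVec_mulVec, hfix, ih]
  obtain ⟨k0, hk0⟩ := Function.ne_iff.1 hw0
  have hvk0 : 0 < v k0 := abs_pos.2 hk0
  refine ⟨v, ?_, ?_⟩
  · intro l
    have h4 : v l = ∑ k, (M ^ n) l k * v k := by
      conv_lhs => rw [← hfixn n]
      simp [Matrix.mulVec, dotProduct]
    rw [h4]
    have : (M ^ n) l k0 * v k0 ≤ ∑ k, (M ^ n) l k * v k :=
      Finset.single_le_sum (fun k _ => mul_nonneg (hpos l k).le (hvnn k)) (Finset.mem_univ k0)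
    exact lt_of_lt_of_le (mul_pos (hpos l k0) hvk0) this
  · intro l
    have := congrFun hfix l
    simpa [Matrix.mulVec, dotProduct, hM] using this

/-- bounded measurable functions are integrable on a probability space -/
lemma aux_int_bdd {Ω : Type} [MeasurableSpace Ω] (P : Measure Ω) [IsProbabilityMeasure P]
    {f : Ω → ℝ} (hf : Measurable f) {C : ℝ} (h : ∀ ω, |f ω| ≤ C) : Integrable f P := by
  refine ⟨hf.aestronglyMeasurable, ?_⟩
  exact HasFiniteIntegral.of_bounded (C := C) (Filter.Eventually.of_forall (fun ω => by
    simpa [Real.norm_eq_abs] using h ω))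

/-- Self-aware diffusion social learning over a strongly-connected network:
`ψ_{k,i}(θ) = (1−γ_{k,i}) μ_{k,i−1}(θ) + γ_{k,i} · Bayes update`, followed by combination.
If at least one agent has positive prior at the true state `θ0` and
`liminf_i γ_{k,i} > 0` for every agent `k`, then every agent develops correct forecasting:
`m_{k,i}(ζ) = ∑_θ μ_{k,i}(θ) L_k(ζ|θ) → L_k(ζ|θ0)` almost surely.
(Here `ξ k i` and `γ k i` refer to time `i+1` of the paper's indexing.) -/
theorem stmt_9
    {Ω : Type} [MeasurableSpace Ω] (P : Measure Ω) [IsProbabilityMeasure P]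
    {N : ℕ}
    (a : Fin N → Fin N → ℝ)
    (ha0 : ∀ l k, 0 ≤ a l k)
    (ha1 : ∀ k, ∑ l, a l k = 1)
    (haprim : ∃ n : ℕ, ∀ l k, 0 < ((Matrix.of a) ^ n) l k)
    {Θ : Type} [Fintype Θ] (θ0 : Θ)
    (Z : Fin N → Type) [∀ k, Fintype (Z k)] [∀ k, MeasurableSpace (Z k)]
    [∀ k, MeasurableSingletonClass (Z k)]
    (L : (k : Fin N) → Θ → Z k → ℝ)
    (hLpos : ∀ k θ ζ, 0 < L k θ ζ)
    (hLsum : ∀ k θ, ∑ ζ, L k θ ζ = 1)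
    (ξ : (k : Fin N) → ℕ → Ω → Z k)
    (hmeas : ∀ k i, Measurable (ξ k i))
    (hindep : iIndepFun (m := fun p : Fin N × ℕ => (inferInstance : MeasurableSpace (Z p.1)))
      (fun p : Fin N × ℕ => ξ p.1 p.2) P)
    (hlaw : ∀ (k : Fin N) (i : ℕ) (ζ : Z k),
      P (ξ k i ⁻¹' {ζ}) = ENNReal.ofReal (L k θ0 ζ))
    (γ : Fin N → ℕ → ℝ)
    (hγ01 : ∀ k i, γ k i ∈ Set.Icc (0 : ℝ) 1)
    (hγliminf : ∀ k, 0 < liminf (fun i => γ k i) atTop)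
    (μ0 : Fin N → Θ → ℝ)
    (hμ0nn : ∀ k θ, 0 ≤ μ0 k θ) (hμ0sum : ∀ k, ∑ θ, μ0 k θ = 1)
    (μ ψ : ℕ → Fin N → Θ → Ω → ℝ)
    (hinit : ∀ k θ ω, μ 0 k θ ω = μ0 k θ)
    (hψ : ∀ (i : ℕ) (k : Fin N) (θ : Θ) (ω : Ω), ψ (i + 1) k θ ω =
      (1 - γ k i) * μ i k θ ω +
        γ k i * (μ i k θ ω * L k θ (ξ k i ω) / ∑ θ' : Θ, μ i k θ' ω * L k θ' (ξ k i ω)))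
    (hμ : ∀ (i : ℕ) (k : Fin N) (θ : Θ) (ω : Ω),
      μ (i + 1) k θ ω = ∑ l : Fin N, a l k * ψ (i + 1) l θ ω)
    (hprior : ∃ k, 0 < μ0 k θ0) :
    ∀ (k : Fin N) (ζ : Z k),
      ∀ᵐ ω ∂P, Tendsto (fun i => ∑ θ : Θ, μ i k θ ω * L k θ ζ) atTop
        (nhds (L k θ0 ζ)) := by
  classical
  intro k0 ζ0
  have hN : 0 < N := k0.pos
  haveI hΘ : Nonempty Θ := by
    by_contra h
    rw [not_nonempty_iff] at h
    have h2 := hμ0sum k0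
    rw [Finset.univ_eq_empty, Finset.sum_empty] at h2
    norm_num at h2
  have hZ : ∀ l : Fin N, Nonempty (Z l) := by
    intro l
    by_contra h
    rw [not_nonempty_iff] at h
    have h2 := hLsum l θ0
    rw [Finset.univ_eq_empty, Finset.sum_empty] at h2
    norm_num at h2
  obtain ⟨n, hMn⟩ := haprim
  obtain ⟨kstar, hkstar⟩ := hprior
  obtain ⟨v, hvpos, hvfix⟩ := aux_perron hN a ha0 ha1 n hMn
  have hZne : ∀ l : Fin N, (Finset.univ : Finset (Θ × Z l)).Nonempty := fun l => by
    haveI := hZ l; exact Finset.univ_nonempty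
  set Blo : Fin N → ℝ := fun l => Finset.univ.inf' (hZne l) (fun p : Θ × Z l => L l p.1 p.2)
    with hBlo_def
  set Bhi : Fin N → ℝ := fun l => Finset.univ.sup' (hZne l) (fun p : Θ × Z l => L l p.1 p.2)
    with hBhi_def
  have hBlo_pos : ∀ l, 0 < Blo l := fun l =>
    (Finset.lt_inf'_iff _).2 (fun p _ => hLpos l p.1 p.2)
  have hBlo_le : ∀ (l : Fin N) (θ : Θ) (ζ : Z l), Blo l ≤ L l θ ζ := fun l θ ζ =>
    Finset.inf'_le _ (Finset.mem_univ (θ, ζ))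
  have hBhi_ge : ∀ (l : Fin N) (θ : Θ) (ζ : Z l), L l θ ζ ≤ Bhi l := fun l θ ζ =>
    Finset.le_sup' (f := fun p : Θ × Z l => L l p.1 p.2) (Finset.mem_univ (θ, ζ))
  have hBhi_pos : ∀ l, 0 < Bhi l := fun l => by
    obtain ⟨ζa⟩ := hZ l
    obtain ⟨θa⟩ := hΘ
    exact lt_of_lt_of_le (hLpos l θa ζa) (hBhi_ge l θa ζa)
  set cρ : ℝ := Finset.univ.inf' ⟨k0, Finset.mem_univ _⟩
    (fun l : Fin N => min 1 (Blo l / Bhi l)) with hcρ_def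
  have hc_pos : 0 < cρ := (Finset.lt_inf'_iff _).2
    (fun l _ => lt_min one_pos (div_pos (hBlo_pos l) (hBhi_pos l)))
  have hc1 : cρ ≤ 1 :=
    le_trans (Finset.inf'_le _ (Finset.mem_univ k0)) (min_le_left _ _)
  have hcle : ∀ l, cρ ≤ Blo l / Bhi l := fun l =>
    le_trans (Finset.inf'_le _ (Finset.mem_univ l)) (min_le_right _ _)
  -- beliefs stay probability vectors
  have hprob : ∀ i (k : Fin N) (ω : Ω), (∀ θ, 0 ≤ μ i k θ ω) ∧ (∑ θ, μ i k θ ω = 1) := by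
    intro i
    induction i with
    | zero =>
      intro k ω
      exact ⟨fun θ => by rw [hinit]; exact hμ0nn k θ, by simp only [hinit]; exact hμ0sum k⟩
    | succ i ih =>
      have hD : ∀ (l : Fin N) (ω : Ω), 0 < ∑ θ' : Θ, μ i l θ' ω * L l θ' (ξ l i ω) := by
        intro l ω
        obtain ⟨hnn, hsum⟩ := ih l ω
        have hex : ∃ θ1, 0 < μ i l θ1 ω := by
          by_contra h
          push_neg at h
          have h2 : ∑ θ, μ i l θ ω ≤ 0 := Finset.sum_nonpos (fun θ _ => h θ)
          rw [hsum] at h2; linarith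
        obtain ⟨θ1, hθ1⟩ := hex
        exact Finset.sum_pos' (fun θ _ => mul_nonneg (hnn θ) (hLpos l θ _).le)
          ⟨θ1, Finset.mem_univ _, mul_pos hθ1 (hLpos l θ1 _)⟩
      have hψnn : ∀ (l : Fin N) (θ : Θ) (ω : Ω), 0 ≤ ψ (i+1) l θ ω := by
        intro l θ ω
        rw [hψ]
        have h1 := (hγ01 l i).1
        have h2 := (hγ01 l i).2
        have h3 := (ih l ω).1 θ
        have h4 := (hLpos l θ (ξ l i ω)).le
        have h5 := (hD l ω).le
        exact add_nonneg (mul_nonneg (by linarith) h3)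
          (mul_nonneg h1 (div_nonneg (mul_nonneg h3 h4) h5))
      have hψsum : ∀ (l : Fin N) (ω : Ω), ∑ θ, ψ (i+1) l θ ω = 1 := by
        intro l ω
        have h0 := (hD l ω).ne'
        simp only [hψ]
        rw [Finset.sum_add_distrib, ← Finset.mul_sum, ← Finset.mul_sum, (ih l ω).2,
          ← Finset.sum_div, div_self h0]
        ring
      intro k ω
      constructor
      · intro θ
        rw [hμ]
        exact Finset.sum_nonneg (fun l _ => mul_nonneg (ha0 l k) (hψnn l θ ω))
      · simp only [hμ]
        rw [Finset.sum_comm]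
        have : ∀ l ∈ Finset.univ, ∑ θ, a l k * ψ (i+1) l θ ω = a l k := by
          intro l _
          rw [← Finset.mul_sum, hψsum l ω, mul_one]
        rw [Finset.sum_congr rfl this]
        exact ha1 k
  have hμnn : ∀ i (k : Fin N) (θ : Θ) (ω : Ω), 0 ≤ μ i k θ ω := fun i k θ ω => (hprob i k ω).1 θ
  have hμsum : ∀ i (k : Fin N) (ω : Ω), ∑ θ, μ i k θ ω = 1 := fun i k ω => (hprob i k ω).2
  have hμle1 : ∀ i (k : Fin N) (θ : Θ) (ω : Ω), μ i k θ ω ≤ 1 := by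
    intro i k θ ω
    rw [← hμsum i k ω]
    exact Finset.single_le_sum (fun θ' _ => hμnn i k θ' ω) (Finset.mem_univ θ)
  have hD : ∀ i (l : Fin N) (ω : Ω), 0 < ∑ θ' : Θ, μ i l θ' ω * L l θ' (ξ l i ω) := by
    intro i l ω
    have hex : ∃ θ1, 0 < μ i l θ1 ω := by
      by_contra h
      push_neg at h
      have h2 : ∑ θ, μ i l θ ω ≤ 0 := Finset.sum_nonpos (fun θ _ => h θ)
      rw [hμsum i l ω] at h2; linarith
    obtain ⟨θ1, hθ1⟩ := hex
    exact Finset.sum_pos' (fun θ _ => mul_nonneg (hμnn i l θ ω) (hLpos l θ _).le)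
      ⟨θ1, Finset.mem_univ _, mul_pos hθ1 (hLpos l θ1 _)⟩
  -- denominators bounded above
  have hDle : ∀ i (l : Fin N) (ω : Ω), ∑ θ' : Θ, μ i l θ' ω * L l θ' (ξ l i ω) ≤ Bhi l := by
    intro i l ω
    calc ∑ θ' : Θ, μ i l θ' ω * L l θ' (ξ l i ω)
        ≤ ∑ θ' : Θ, μ i l θ' ω * Bhi l := Finset.sum_le_sum (fun θ' _ =>
          mul_le_mul_of_nonneg_left (hBhi_ge l θ' _) (hμnn i l θ' ω))
      _ = Bhi l := by rw [← Finset.sum_mul, hμsum i l ω, one_mul]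
  -- one-step lower bound for the true state
  have hψlb : ∀ i (l : Fin N) (ω : Ω), cρ * μ i l θ0 ω ≤ ψ (i+1) l θ0 ω := by
    intro i l ω
    rw [hψ]
    have hγ0 := (hγ01 l i).1
    have hγ1 := (hγ01 l i).2
    have hμ0' := hμnn i l θ0 ω
    have hDpos := hD i l ω
    have hDle' := hDle i l ω
    have hLl := hBlo_le l θ0 (ξ l i ω)
    have hdiv : μ i l θ0 ω * Blo l / Bhi l ≤
        μ i l θ0 ω * L l θ0 (ξ l i ω) / ∑ θ' : Θ, μ i l θ' ω * L l θ' (ξ l i ω) := by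
      apply div_le_div₀ (mul_nonneg hμ0' (hLpos l θ0 _).le)
        (mul_le_mul_of_nonneg_left hLl hμ0') hDpos hDle'
    have hcl := hcle l
    have hBhip := hBhi_pos l
    have hkey : cρ * μ i l θ0 ω ≤ (1 - γ l i) * μ i l θ0 ω
        + γ l i * (μ i l θ0 ω * Blo l / Bhi l) := by
      have h1 : μ i l θ0 ω * Blo l / Bhi l = (Blo l / Bhi l) * μ i l θ0 ω := by ring
      rw [h1]
      nlinarith [mul_nonneg hγ0 (mul_nonneg (sub_nonneg.2 hcl) hμ0'),
        mul_nonneg (sub_nonneg.2 hγ1) (mul_nonneg (sub_nonneg.2 hc1) hμ0')]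
    refine le_trans hkey ?_
    have := mul_le_mul_of_nonneg_left hdiv hγ0
    linarith
  have hstep : ∀ i (k : Fin N) (ω : Ω),
      cρ * ∑ l, a l k * μ i l θ0 ω ≤ μ (i+1) k θ0 ω := by
    intro i k ω
    rw [hμ, Finset.mul_sum]
    apply Finset.sum_le_sum
    intro l _
    have h1 := mul_le_mul_of_nonneg_left (hψlb i l ω) (ha0 l k)
    calc cρ * (a l k * μ i l θ0 ω) = a l k * (cρ * μ i l θ0 ω) := by ring
      _ ≤ a l k * ψ (i+1) l θ0 ω := h1
  have hpow : ∀ (j i : ℕ) (k : Fin N) (ω : Ω),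
      cρ^j * ∑ l, ((Matrix.of a)^j) l k * μ i l θ0 ω ≤ μ (i+j) k θ0 ω := by
    intro j
    induction j with
    | zero =>
      intro i k ω
      simp only [pow_zero, one_mul, pow_zero, Nat.add_zero]
      have : ∀ l ∈ Finset.univ, ((1 : Matrix (Fin N) (Fin N) ℝ)) l k * μ i l θ0 ω
          = (if l = k then μ i l θ0 ω else 0) := by
        intro l _
        rw [Matrix.one_apply]
        split <;> simp
      rw [Finset.sum_congr rfl this, Finset.sum_ite_eq' Finset.univ k (fun l => μ i l θ0 ω)]
      simp
    | succ j ih =>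
      intro i k ω
      have h1 : cρ * ∑ l, a l k * μ (i+j) l θ0 ω ≤ μ (i+j+1) k θ0 ω := hstep (i+j) k ω
      have h2 : ∑ l, a l k * (cρ^j * ∑ m, ((Matrix.of a)^j) m l * μ i m θ0 ω)
          ≤ ∑ l, a l k * μ (i+j) l θ0 ω := by
        apply Finset.sum_le_sum
        intro l _
        exact mul_le_mul_of_nonneg_left (ih i l ω) (ha0 l k)
      have hmulapp : ∀ m, ((Matrix.of a)^(j+1)) m k = ∑ l, ((Matrix.of a)^j) m l * a l k := by
        intro m
        rw [pow_succ, Matrix.mul_apply]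
        rfl
      have h3 : ∑ l, a l k * (cρ^j * ∑ m, ((Matrix.of a)^j) m l * μ i m θ0 ω)
          = cρ^j * ∑ m, ((Matrix.of a)^(j+1)) m k * μ i m θ0 ω := by
        calc ∑ l, a l k * (cρ^j * ∑ m, ((Matrix.of a)^j) m l * μ i m θ0 ω)
            = ∑ l, ∑ m, cρ^j * (((Matrix.of a)^j) m l * a l k * μ i m θ0 ω) := by
              refine Finset.sum_congr rfl (fun l _ => ?_)
              rw [Finset.mul_sum, Finset.mul_sum]
              exact Finset.sum_congr rfl (fun m _ => by ring)
          _ = ∑ m, ∑ l, cρ^j * (((Matrix.of a)^j) m l * a l k * μ i m θ0 ω) :=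
              Finset.sum_comm
          _ = cρ^j * ∑ m, ((Matrix.of a)^(j+1)) m k * μ i m θ0 ω := by
              rw [Finset.mul_sum]
              refine Finset.sum_congr rfl (fun m _ => ?_)
              rw [hmulapp m, Finset.sum_mul, Finset.mul_sum]
      have h4 : cρ^(j+1) * ∑ m, ((Matrix.of a)^(j+1)) m k * μ i m θ0 ω
          = cρ * (∑ l, a l k * (cρ^j * ∑ m, ((Matrix.of a)^j) m l * μ i m θ0 ω)) := by
        rw [h3]; ring
      rw [show i + (j+1) = i + j + 1 from rfl, h4]
      exact le_trans (mul_le_mul_of_nonneg_left h2 hc_pos.le) h1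
  -- uniform positive lower bound after time n
  set εM : ℝ := Finset.univ.inf' ⟨(k0, k0), Finset.mem_univ _⟩
    (fun p : Fin N × Fin N => ((Matrix.of a)^n) p.1 p.2) with hεM_def
  have hεM_pos : 0 < εM := (Finset.lt_inf'_iff _).2 (fun p _ => hMn p.1 p.2)
  have hεM_le : ∀ l k : Fin N, εM ≤ ((Matrix.of a)^n) l k := fun l k =>
    Finset.inf'_le _ (Finset.mem_univ (l, k))
  set δ0 : ℝ := cρ^n * (εM * μ0 kstar θ0) with hδ0_def
  have hδ0_pos : 0 < δ0 := by positivity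
  have hlow0 : ∀ (k : Fin N) (ω : Ω), δ0 ≤ μ n k θ0 ω := by
    intro k ω
    have h1 := hpow n 0 k ω
    rw [zero_add] at h1
    refine le_trans ?_ h1
    have h2 : εM * μ0 kstar θ0 ≤ ∑ l, ((Matrix.of a)^n) l k * μ 0 l θ0 ω := by
      refine le_trans ?_ (Finset.single_le_sum
        (f := fun l => ((Matrix.of a)^n) l k * μ 0 l θ0 ω)
        (fun l _ => mul_nonneg (hMn l k).le (hμnn 0 l θ0 ω)) (Finset.mem_univ kstar))
      simp only [hinit]
      exact mul_le_mul_of_nonneg_right (hεM_le kstar k) (hμ0nn kstar θ0)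
    calc δ0 = cρ^n * (εM * μ0 kstar θ0) := rfl
      _ ≤ cρ^n * ∑ l, ((Matrix.of a)^n) l k * μ 0 l θ0 ω :=
          mul_le_mul_of_nonneg_left h2 (by positivity)
  have hlow : ∀ (j : ℕ) (k : Fin N) (ω : Ω), δ0 * cρ^j ≤ μ (n + j) k θ0 ω := by
    intro j
    induction j with
    | zero => intro k ω; simpa using hlow0 k ω
    | succ j ih =>
      intro k ω
      have h1 := hstep (n + j) k ω
      rw [show n + (j+1) = n + j + 1 from rfl]
      refine le_trans ?_ h1
      have h2 : ∑ l, a l k * (δ0 * cρ^j) ≤ ∑ l, a l k * μ (n+j) l θ0 ω :=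
        Finset.sum_le_sum (fun l _ => mul_le_mul_of_nonneg_left (ih l ω) (ha0 l k))
      have h3 : ∑ l, a l k * (δ0 * cρ^j) = δ0 * cρ^j := by
        rw [← Finset.sum_mul, ha1 k, one_mul]
      calc δ0 * cρ^(j+1) = cρ * ∑ l, a l k * (δ0 * cρ^j) := by rw [h3]; ring
        _ ≤ cρ * ∑ l, a l k * μ (n+j) l θ0 ω :=
            mul_le_mul_of_nonneg_left h2 hc_pos.le
  have hμpos : ∀ (j : ℕ) (k : Fin N) (ω : Ω), 0 < μ (n + j) k θ0 ω := fun j k ω =>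
    lt_of_lt_of_le (by positivity) (hlow j k ω)
  -- representation of beliefs as functions of past signals
  have hrep : ∀ i : ℕ, ∃ F : ((p : Fin N × Fin i) → Z p.1) → (Fin N → Θ → ℝ),
      ∀ (k : Fin N) (θ : Θ) (ω : Ω), μ i k θ ω = F (fun p => ξ p.1 p.2 ω) k θ := by
    intro i
    induction i with
    | zero => exact ⟨fun _ => μ0, fun k θ ω => hinit k θ ω⟩
    | succ i ih =>
      obtain ⟨F, hF⟩ := ih
      refine ⟨fun x k θ => ∑ l, a l k *
        ((1 - γ l i) * F (fun p => x (p.1, p.2.castSucc)) l θ +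
          γ l i * (F (fun p => x (p.1, p.2.castSucc)) l θ * L l θ (x (l, Fin.last i)) /
            ∑ θ' : Θ, F (fun p => x (p.1, p.2.castSucc)) l θ' * L l θ' (x (l, Fin.last i)))),
        fun k θ ω => ?_⟩
      rw [hμ]
      simp only [hψ, hF]
      rfl
  have hμmeas : ∀ i (k : Fin N) (θ : Θ), Measurable (fun ω => μ i k θ ω) := by
    intro i k θ
    obtain ⟨F, hF⟩ := hrep i
    have hpath : Measurable (fun ω => (fun p : Fin N × Fin i => ξ p.1 p.2 ω)) :=
      measurable_pi_lambda _ (fun p => hmeas p.1 p.2)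
    have hFm : Measurable (fun x : (p : Fin N × Fin i) → Z p.1 => F x k θ) :=
      measurable_of_finite _
    have heq : (fun ω => μ i k θ ω)
        = (fun x : (p : Fin N × Fin i) → Z p.1 => F x k θ) ∘ (fun ω p => ξ p.1 p.2 ω) := by
      funext ω; exact hF k θ ω
    rw [heq]; exact hFm.comp hpath
  -- forecast bounds
  have hm_lb : ∀ i (l : Fin N) (ζ : Z l) ω, Blo l ≤ ∑ θ, μ i l θ ω * L l θ ζ := by
    intro i l ζ ω
    calc Blo l = ∑ θ, μ i l θ ω * Blo l := by rw [← Finset.sum_mul, hμsum, one_mul]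
      _ ≤ ∑ θ, μ i l θ ω * L l θ ζ := Finset.sum_le_sum (fun θ _ =>
          mul_le_mul_of_nonneg_left (hBlo_le l θ ζ) (hμnn i l θ ω))
  have hm_ub : ∀ i (l : Fin N) (ζ : Z l) ω, ∑ θ, μ i l θ ω * L l θ ζ ≤ Bhi l := by
    intro i l ζ ω
    calc ∑ θ, μ i l θ ω * L l θ ζ ≤ ∑ θ, μ i l θ ω * Bhi l := Finset.sum_le_sum (fun θ _ =>
          mul_le_mul_of_nonneg_left (hBhi_ge l θ ζ) (hμnn i l θ ω))
      _ = Bhi l := by rw [← Finset.sum_mul, hμsum, one_mul]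
  have hm_pos : ∀ i (l : Fin N) (ζ : Z l) ω, 0 < ∑ θ, μ i l θ ω * L l θ ζ := fun i l ζ ω =>
    lt_of_lt_of_le (hBlo_pos l) (hm_lb i l ζ ω)
  have hm_sum : ∀ i (l : Fin N) (ω : Ω), ∑ ζ, ∑ θ, μ i l θ ω * L l θ ζ = 1 := by
    intro i l ω
    rw [Finset.sum_comm]
    have h1 : ∀ θ ∈ Finset.univ, ∑ ζ, μ i l θ ω * L l θ ζ = μ i l θ ω := fun θ _ => by
      rw [← Finset.mul_sum, hLsum, mul_one]
    rw [Finset.sum_congr rfl h1, hμsum]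
  have hmmeas : ∀ i (l : Fin N) (ζ : Z l), Measurable (fun ω => ∑ θ, μ i l θ ω * L l θ ζ) :=
    fun i l ζ => Finset.measurable_sum _ (fun θ _ => (hμmeas i l θ).mul_const _)
  -- the KL divergence of the forecast, and the Lyapunov quantities
  set KLf : ℕ → Fin N → Ω → ℝ := fun i l ω =>
    ∑ ζ, L l θ0 ζ * Real.log (L l θ0 ζ / ∑ θ, μ i l θ ω * L l θ ζ) with hKLf_def
  set G : ℕ → Ω → ℝ := fun i ω => ∑ l, v l * (γ l i * KLf i l ω) with hG_def
  set S : ℕ → Ω → ℝ := fun i ω => ∑ l, v l * Real.log (μ i l θ0 ω) with hS_def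
  set X : ℕ → Ω → ℝ := fun i ω => ∑ l, v l * (γ l i * (Real.log (L l θ0 (ξ l i ω))
    - Real.log (∑ θ, μ i l θ ω * L l θ (ξ l i ω)))) with hX_def
  have hKL_nonneg : ∀ i (l : Fin N) ω, 0 ≤ KLf i l ω := fun i l ω =>
    aux_kl_nonneg (fun ζ => L l θ0 ζ) (fun ζ => ∑ θ, μ i l θ ω * L l θ ζ)
      (fun ζ => hLpos l θ0 ζ) (fun ζ => hm_pos i l ζ ω) (hLsum l θ0) (hm_sum i l ω)
  have hKL_sq : ∀ i (l : Fin N) ω (ζ : Z l),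
      ((∑ θ, μ i l θ ω * L l θ ζ) - L l θ0 ζ)^2 / 2 ≤ KLf i l ω := fun i l ω ζ =>
    aux_kl_sq (fun ζ => L l θ0 ζ) (fun ζ => ∑ θ, μ i l θ ω * L l θ ζ)
      (fun ζ => hLpos l θ0 ζ) (fun ζ => hm_pos i l ζ ω) (hLsum l θ0) (hm_sum i l ω) ζ
  have hlog_bd : ∀ i (l : Fin N) (ζ : Z l) ω,
      |Real.log (∑ θ, μ i l θ ω * L l θ ζ)| ≤ |Real.log (Blo l)| + |Real.log (Bhi l)| := by
    intro i l ζ ω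
    have h1 : Real.log (Blo l) ≤ Real.log (∑ θ, μ i l θ ω * L l θ ζ) :=
      Real.log_le_log (hBlo_pos l) (hm_lb i l ζ ω)
    have h2 : Real.log (∑ θ, μ i l θ ω * L l θ ζ) ≤ Real.log (Bhi l) :=
      Real.log_le_log (hm_pos i l ζ ω) (hm_ub i l ζ ω)
    have h3 := neg_abs_le (Real.log (Blo l))
    have h4 := le_abs_self (Real.log (Bhi l))
    have h7 := abs_nonneg (Real.log (Blo l))
    have h8 := abs_nonneg (Real.log (Bhi l))
    rw [abs_le]
    constructor <;> [linarith; linarith]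
  set CK : Fin N → ℝ := fun l => ∑ ζ : Z l,
    (|Real.log (L l θ0 ζ)| + (|Real.log (Blo l)| + |Real.log (Bhi l)|)) with hCK_def
  have hKL_bd : ∀ i (l : Fin N) ω, |KLf i l ω| ≤ CK l := by
    intro i l ω
    refine le_trans (Finset.abs_sum_le_sum_abs _ _) (Finset.sum_le_sum (fun ζ _ => ?_))
    have hL1 : L l θ0 ζ ≤ 1 := by
      rw [← hLsum l θ0]
      exact Finset.single_le_sum (fun ζ' _ => (hLpos l θ0 ζ').le) (Finset.mem_univ ζ)
    have hld : Real.log (L l θ0 ζ / ∑ θ, μ i l θ ω * L l θ ζ)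
        = Real.log (L l θ0 ζ) - Real.log (∑ θ, μ i l θ ω * L l θ ζ) :=
      Real.log_div (hLpos l θ0 ζ).ne' (hm_pos i l ζ ω).ne'
    rw [abs_mul, hld, abs_of_pos (hLpos l θ0 ζ)]
    have h5 := hlog_bd i l ζ ω
    have h6 := abs_sub (Real.log (L l θ0 ζ)) (Real.log (∑ θ, μ i l θ ω * L l θ ζ))
    calc L l θ0 ζ * |Real.log (L l θ0 ζ) - Real.log (∑ θ, μ i l θ ω * L l θ ζ)|
        ≤ 1 * (|Real.log (L l θ0 ζ)| + (|Real.log (Blo l)| + |Real.log (Bhi l)|)) := by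
          apply mul_le_mul hL1 ?_ (abs_nonneg _) one_pos.le
          have h6 : |Real.log (L l θ0 ζ) - Real.log (∑ θ, μ i l θ ω * L l θ ζ)|
              ≤ |Real.log (L l θ0 ζ)| + |Real.log (∑ θ, μ i l θ ω * L l θ ζ)| := by
            have h9 := abs_add_le (Real.log (L l θ0 ζ)) (-(Real.log (∑ θ, μ i l θ ω * L l θ ζ)))
            rw [abs_neg] at h9
            simpa [sub_eq_add_neg] using h9
          linarith [h5, h6]
      _ = |Real.log (L l θ0 ζ)| + (|Real.log (Blo l)| + |Real.log (Bhi l)|) := one_mul _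
  -- the key pointwise inequality
  have hψpos : ∀ (j : ℕ) (l : Fin N) (ω : Ω), 0 < ψ (n + j + 1) l θ0 ω := fun j l ω =>
    lt_of_lt_of_le (mul_pos hc_pos (hμpos j l ω)) (hψlb (n+j) l ω)
  have hkey : ∀ (j : ℕ) (ω : Ω), S (n+j) ω + X (n+j) ω ≤ S (n+j+1) ω := by
    intro j ω
    set i := n + j with hi_def
    -- step 1 : per agent lower bound on log ψ
    have hstep1 : ∀ l : Fin N, Real.log (μ i l θ0 ω)
        + γ l i * (Real.log (L l θ0 (ξ l i ω))
          - Real.log (∑ θ, μ i l θ ω * L l θ (ξ l i ω)))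
        ≤ Real.log (ψ (i+1) l θ0 ω) := by
      intro l
      have hγ0 := (hγ01 l i).1
      have hγ1 := (hγ01 l i).2
      have hμp : 0 < μ i l θ0 ω := hμpos j l ω
      have hDp : 0 < ∑ θ', μ i l θ' ω * L l θ' (ξ l i ω) := hD i l ω
      set t : ℝ := L l θ0 (ξ l i ω) / ∑ θ', μ i l θ' ω * L l θ' (ξ l i ω) with ht_def
      have ht : 0 < t := div_pos (hLpos l θ0 _) hDp
      have hψeq : ψ (i+1) l θ0 ω = μ i l θ0 ω * ((1 - γ l i) + γ l i * t) := by
        rw [hψ, ht_def]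
        ring
      have hfac : 0 < (1 - γ l i) + γ l i * t := by
        rcases eq_or_lt_of_le hγ1 with h | h
        · rw [h]; simpa using ht
        · nlinarith [mul_nonneg hγ0 ht.le]
      have hlogψ : Real.log (ψ (i+1) l θ0 ω)
          = Real.log (μ i l θ0 ω) + Real.log ((1 - γ l i) + γ l i * t) := by
        rw [hψeq, Real.log_mul hμp.ne' hfac.ne']
      have hgm := Real.geom_mean_le_arith_mean2_weighted (sub_nonneg.2 hγ1) hγ0
        zero_le_one ht.le (by ring : (1 - γ l i) + γ l i = 1)
      have hgm2 : t ^ (γ l i) ≤ (1 - γ l i) + γ l i * t := by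
        calc t ^ (γ l i) = (1:ℝ) ^ (1 - γ l i) * t ^ (γ l i) := by
              rw [Real.one_rpow, one_mul]
          _ ≤ (1 - γ l i) * 1 + γ l i * t := hgm
          _ = (1 - γ l i) + γ l i * t := by ring
      have hloggm : γ l i * Real.log t ≤ Real.log ((1 - γ l i) + γ l i * t) := by
        calc γ l i * Real.log t = Real.log (t ^ (γ l i)) := (Real.log_rpow ht _).symm
          _ ≤ Real.log ((1 - γ l i) + γ l i * t) :=
              Real.log_le_log (Real.rpow_pos_of_pos ht _) hgm2
      have hlogt : Real.log t = Real.log (L l θ0 (ξ l i ω))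
          - Real.log (∑ θ', μ i l θ' ω * L l θ' (ξ l i ω)) :=
        Real.log_div (hLpos l θ0 _).ne' hDp.ne'
      rw [hlogψ]
      rw [hlogt] at hloggm
      linarith
    -- step 2 : concavity of log across the combination step
    have hstep2 : ∀ k : Fin N,
        ∑ l, a l k * Real.log (ψ (i+1) l θ0 ω) ≤ Real.log (μ (i+1) k θ0 ω) := by
      intro k
      have hgm := Real.geom_mean_le_arith_mean_weighted Finset.univ (fun l => a l k)
        (fun l => ψ (i+1) l θ0 ω) (fun l _ => ha0 l k) (ha1 k)
        (fun l _ => (hψpos j l ω).le)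
      have hprodpos : 0 < ∏ l, (ψ (i+1) l θ0 ω) ^ (a l k) :=
        Finset.prod_pos (fun l _ => Real.rpow_pos_of_pos (hψpos j l ω) _)
      have h2 : Real.log (∏ l, (ψ (i+1) l θ0 ω) ^ (a l k))
          ≤ Real.log (μ (i+1) k θ0 ω) := by
        apply Real.log_le_log hprodpos
        rw [hμ]
        exact hgm
      calc ∑ l, a l k * Real.log (ψ (i+1) l θ0 ω)
          = Real.log (∏ l, (ψ (i+1) l θ0 ω) ^ (a l k)) := by
            rw [Real.log_prod (fun l _ => (Real.rpow_pos_of_pos (hψpos j l ω) _).ne')]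
            exact Finset.sum_congr rfl (fun l _ => (Real.log_rpow (hψpos j l ω) _).symm)
        _ ≤ Real.log (μ (i+1) k θ0 ω) := h2
    -- combine
    set w : Fin N → ℝ := fun l => Real.log (μ i l θ0 ω)
      + γ l i * (Real.log (L l θ0 (ξ l i ω))
        - Real.log (∑ θ, μ i l θ ω * L l θ (ξ l i ω))) with hw_def
    have hcomb : ∀ k : Fin N, ∑ l, a l k * w l ≤ Real.log (μ (i+1) k θ0 ω) := by
      intro k
      refine le_trans (Finset.sum_le_sum (fun l _ => ?_)) (hstep2 k)
      exact mul_le_mul_of_nonneg_left (hstep1 l) (ha0 l k)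
    have hswap : ∑ k, v k * ∑ l, a l k * w l = ∑ l, v l * w l := by
      calc ∑ k, v k * ∑ l, a l k * w l
          = ∑ k, ∑ l, v k * (a l k * w l) := by
            exact Finset.sum_congr rfl (fun k _ => Finset.mul_sum _ _ _)
        _ = ∑ l, ∑ k, v k * (a l k * w l) := Finset.sum_comm
        _ = ∑ l, (∑ k, a l k * v k) * w l := by
            refine Finset.sum_congr rfl (fun l _ => ?_)
            rw [Finset.sum_mul]
            exact Finset.sum_congr rfl (fun k _ => by ring)
        _ = ∑ l, v l * w l := by
            exact Finset.sum_congr rfl (fun l _ => by rw [hvfix l])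
    have hfinal : S i ω + X i ω = ∑ l, v l * w l := by
      rw [hS_def, hX_def, hw_def]
      simp only []
      rw [← Finset.sum_add_distrib]
      exact Finset.sum_congr rfl (fun l _ => by ring)
    rw [hfinal, ← hswap]
    calc ∑ k, v k * ∑ l, a l k * w l ≤ ∑ k, v k * Real.log (μ (i+1) k θ0 ω) :=
        Finset.sum_le_sum (fun k _ => mul_le_mul_of_nonneg_left (hcomb k) (hvpos k).le)
      _ = S (i+1) ω := rfl
  -- telescoping bound
  have hSle0 : ∀ (i : ℕ) (ω : Ω), S i ω ≤ 0 := by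
    intro i ω
    apply Finset.sum_nonpos
    intro l _
    have h1 : Real.log (μ i l θ0 ω) ≤ 0 := Real.log_nonpos (hμnn i l θ0 ω) (hμle1 i l θ0 ω)
    have := mul_le_mul_of_nonneg_left h1 (hvpos l).le
    simpa using this
  have hSn_lb : ∀ ω : Ω, ∑ l, v l * Real.log δ0 ≤ S n ω := by
    intro ω
    apply Finset.sum_le_sum
    intro l _
    exact mul_le_mul_of_nonneg_left (Real.log_le_log hδ0_pos (hlow0 l ω)) (hvpos l).le
  set C0 : ℝ := -(∑ l, v l * Real.log δ0) with hC0_def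
  have htel : ∀ (I : ℕ) (ω : Ω), ∑ j ∈ Finset.range I, X (n+j) ω ≤ S (n+I) ω - S n ω := by
    intro I ω
    induction I with
    | zero => simp
    | succ I ih =>
      rw [Finset.sum_range_succ]
      have h2 := hkey I ω
      have h3 : S (n + I) ω + X (n + I) ω ≤ S (n + (I+1)) ω := h2
      linarith
  have htel2 : ∀ (I : ℕ) (ω : Ω), ∑ j ∈ Finset.range I, X (n+j) ω ≤ C0 := by
    intro I ω
    have h1 := htel I ω
    have h2 := hSle0 (n+I) ω
    have h3 := hSn_lb ω
    rw [hC0_def]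
    linarith
  -- absolute bound helper
  have habs_between : ∀ (l : Fin N) (x : ℝ), Real.log (Blo l) ≤ x → x ≤ Real.log (Bhi l) →
      |x| ≤ |Real.log (Blo l)| + |Real.log (Bhi l)| := by
    intro l x h1 h2
    have h3 := neg_abs_le (Real.log (Blo l))
    have h4 := le_abs_self (Real.log (Bhi l))
    have h7 := abs_nonneg (Real.log (Blo l))
    have h8 := abs_nonneg (Real.log (Bhi l))
    rw [abs_le]
    exact ⟨by linarith, by linarith⟩
  -- measurability and integrability of the increments
  have hlogLmeas : ∀ (i : ℕ) (l : Fin N),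
      Measurable (fun ω => Real.log (L l θ0 (ξ l i ω))) := fun i l =>
    (measurable_of_finite (fun z : Z l => Real.log (L l θ0 z))).comp (hmeas l i)
  have hDmeas : ∀ (i : ℕ) (l : Fin N),
      Measurable (fun ω => ∑ θ, μ i l θ ω * L l θ (ξ l i ω)) := fun i l =>
    Finset.measurable_sum _ (fun θ _ => (hμmeas i l θ).mul
      ((measurable_of_finite (fun z : Z l => L l θ z)).comp (hmeas l i)))
  have hlogL_bd : ∀ (i : ℕ) (l : Fin N) (ω : Ω),
      |Real.log (L l θ0 (ξ l i ω))| ≤ |Real.log (Blo l)| + |Real.log (Bhi l)| := by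
    intro i l ω
    exact habs_between l _ (Real.log_le_log (hBlo_pos l) (hBlo_le l θ0 _))
      (Real.log_le_log (hLpos l θ0 _) (hBhi_ge l θ0 _))
  have hlogD_bd : ∀ (i : ℕ) (l : Fin N) (ω : Ω),
      |Real.log (∑ θ, μ i l θ ω * L l θ (ξ l i ω))|
        ≤ |Real.log (Blo l)| + |Real.log (Bhi l)| := fun i l ω => hlog_bd i l (ξ l i ω) ω
  have hXterm_meas : ∀ (i : ℕ) (l : Fin N), Measurable (fun ω =>
      v l * (γ l i * (Real.log (L l θ0 (ξ l i ω))
        - Real.log (∑ θ, μ i l θ ω * L l θ (ξ l i ω))))) := fun i l =>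
    (((hlogLmeas i l).sub (Real.measurable_log.comp (hDmeas i l))).const_mul _).const_mul _
  have hXterm_bd : ∀ (i : ℕ) (l : Fin N) (ω : Ω),
      |v l * (γ l i * (Real.log (L l θ0 (ξ l i ω))
        - Real.log (∑ θ, μ i l θ ω * L l θ (ξ l i ω))))|
        ≤ v l * (2 * (|Real.log (Blo l)| + |Real.log (Bhi l)|)) := by
    intro i l ω
    rw [abs_mul, abs_mul, abs_of_nonneg (hvpos l).le, abs_of_nonneg (hγ01 l i).1]
    apply mul_le_mul_of_nonneg_left ?_ (hvpos l).le
    have h1 := abs_sub (Real.log (L l θ0 (ξ l i ω)))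
      (Real.log (∑ θ, μ i l θ ω * L l θ (ξ l i ω)))
    have h2 := hlogL_bd i l ω
    have h3 := hlogD_bd i l ω
    have h4 := (hγ01 l i).2
    have h5 := (hγ01 l i).1
    have h6 : |Real.log (L l θ0 (ξ l i ω))
        - Real.log (∑ θ, μ i l θ ω * L l θ (ξ l i ω))|
        ≤ 2 * (|Real.log (Blo l)| + |Real.log (Bhi l)|) := by linarith
    calc γ l i * |Real.log (L l θ0 (ξ l i ω))
        - Real.log (∑ θ, μ i l θ ω * L l θ (ξ l i ω))|
        ≤ 1 * (2 * (|Real.log (Blo l)| + |Real.log (Bhi l)|)) := by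
          apply mul_le_mul h4 h6 (abs_nonneg _) one_pos.le
      _ = 2 * (|Real.log (Blo l)| + |Real.log (Bhi l)|) := one_mul _
  have hXint : ∀ i : ℕ, Integrable (X i) P := by
    intro i
    apply integrable_finset_sum
    intro l _
    exact aux_int_bdd P (hXterm_meas i l) (hXterm_bd i l)
  have hKLmeas : ∀ (i : ℕ) (l : Fin N), Measurable (KLf i l) := by
    intro i l
    apply Finset.measurable_sum
    intro ζ _
    exact (Real.measurable_log.comp ((measurable_const.div (hmmeas i l ζ)))).const_mul _
  have hGmeas : ∀ i : ℕ, Measurable (G i) := fun i =>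
    Finset.measurable_sum _ (fun l _ => ((hKLmeas i l).const_mul _).const_mul _)
  have hGterm_bd : ∀ (i : ℕ) (l : Fin N) (ω : Ω),
      |v l * (γ l i * KLf i l ω)| ≤ v l * CK l := by
    intro i l ω
    rw [abs_mul, abs_mul, abs_of_nonneg (hvpos l).le, abs_of_nonneg (hγ01 l i).1]
    apply mul_le_mul_of_nonneg_left ?_ (hvpos l).le
    calc γ l i * |KLf i l ω| ≤ 1 * CK l :=
        mul_le_mul (hγ01 l i).2 (hKL_bd i l ω) (abs_nonneg _) one_pos.le
      _ = CK l := one_mul _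
  have hGint : ∀ i : ℕ, Integrable (G i) P := by
    intro i
    apply integrable_finset_sum
    intro l _
    exact aux_int_bdd P (((hKLmeas i l).const_mul _).const_mul _) (hGterm_bd i l)
  have hGnn : ∀ (i : ℕ) (ω : Ω), 0 ≤ G i ω := by
    intro i ω
    apply Finset.sum_nonneg
    intro l _
    exact mul_nonneg (hvpos l).le (mul_nonneg (hγ01 l i).1 (hKL_nonneg i l ω))
  -- independence of current signal from the past
  have hInd : ∀ (i : ℕ) (l : Fin N), IndepFun (ξ l i)
      (fun ω => (fun p : Fin N × Fin i => ξ p.1 p.2 ω)) P := by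
    intro i l
    have hdisj : Disjoint ({(l, i)} : Finset (Fin N × ℕ)) (Finset.univ ×ˢ Finset.range i) := by
      simp only [Finset.disjoint_singleton_left, Finset.mem_product, Finset.mem_range]
      intro h
      exact lt_irrefl i h.2
    have hBig := hindep.indepFun_finset {(l, i)} (Finset.univ ×ˢ Finset.range i) hdisj
      (fun p => hmeas p.1 p.2)
    have hφL : Measurable
        (fun g : ((p : ({(l,i)} : Finset (Fin N × ℕ))) → Z (p : Fin N × ℕ).1) =>
          g ⟨(l,i), Finset.mem_singleton_self _⟩) := measurable_pi_apply _
    have hφR : Measurable (fun (g : (p : ((Finset.univ ×ˢ Finset.range i) : Finset (Fin N × ℕ)))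
        → Z (p : Fin N × ℕ).1) (p : Fin N × Fin i) =>
        g ⟨(p.1, (p.2 : ℕ)), by
          simp only [Finset.mem_product, Finset.mem_range, Finset.mem_univ, true_and]
          exact p.2.isLt⟩) :=
      measurable_pi_lambda _ (fun p => measurable_pi_apply _)
    exact hBig.comp hφL hφR
  -- expectation identity : E[X i] = E[G i]
  have hEX : ∀ i : ℕ, ∫ ω, X i ω ∂P = ∫ ω, G i ω ∂P := by
    intro i
    obtain ⟨F, hF⟩ := hrep i
    have hHmeas : ∀ (l : Fin N) (ζ : Z l), Measurable (fun ω => Real.log (L l θ0 ζ)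
        - Real.log (∑ θ, μ i l θ ω * L l θ ζ)) := fun l ζ =>
      measurable_const.sub (Real.measurable_log.comp (hmmeas i l ζ))
    have hHbd : ∀ (l : Fin N) (ζ : Z l) (ω : Ω), |Real.log (L l θ0 ζ)
        - Real.log (∑ θ, μ i l θ ω * L l θ ζ)|
        ≤ |Real.log (L l θ0 ζ)| + (|Real.log (Blo l)| + |Real.log (Bhi l)|) := by
      intro l ζ ω
      refine le_trans (abs_sub _ _) ?_
      have := hlog_bd i l ζ ω
      linarith
    have hHint : ∀ (l : Fin N) (ζ : Z l), Integrable (fun ω => Real.log (L l θ0 ζ)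
        - Real.log (∑ θ, μ i l θ ω * L l θ ζ)) P := fun l ζ =>
      aux_int_bdd P (hHmeas l ζ) (hHbd l ζ)
    have hindmeas : ∀ (l : Fin N) (ζ : Z l),
        Measurable (fun ω => if ξ l i ω = ζ then (1:ℝ) else 0) :=
      fun l ζ => (measurable_of_finite (fun z : Z l => if z = ζ then (1:ℝ) else 0)).comp
        (hmeas l i)
    have hindbd : ∀ (l : Fin N) (ζ : Z l) (ω : Ω), |if ξ l i ω = ζ then (1:ℝ) else 0| ≤ 1 := by
      intro l ζ ω; split <;> simp
    have hindint : ∀ (l : Fin N) (ζ : Z l),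
        Integrable (fun ω => if ξ l i ω = ζ then (1:ℝ) else 0) P :=
      fun l ζ => aux_int_bdd P (hindmeas l ζ) (hindbd l ζ)
    have hprodint : ∀ (l : Fin N) (ζ : Z l), Integrable (fun ω =>
        (if ξ l i ω = ζ then (1:ℝ) else 0) * (Real.log (L l θ0 ζ)
          - Real.log (∑ θ, μ i l θ ω * L l θ ζ))) P := by
      intro l ζ
      refine aux_int_bdd P ((hindmeas l ζ).mul (hHmeas l ζ))
        (C := |Real.log (L l θ0 ζ)| + (|Real.log (Blo l)| + |Real.log (Bhi l)|)) (fun ω => ?_)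
      rw [abs_mul]
      calc |if ξ l i ω = ζ then (1:ℝ) else 0| * |Real.log (L l θ0 ζ)
          - Real.log (∑ θ, μ i l θ ω * L l θ ζ)|
          ≤ 1 * (|Real.log (L l θ0 ζ)| + (|Real.log (Blo l)| + |Real.log (Bhi l)|)) :=
            mul_le_mul (hindbd l ζ ω) (hHbd l ζ ω) (abs_nonneg _) one_pos.le
        _ = _ := one_mul _
    have hterm : ∀ l : Fin N,
        ∫ ω, (Real.log (L l θ0 (ξ l i ω))
          - Real.log (∑ θ, μ i l θ ω * L l θ (ξ l i ω))) ∂P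
          = ∫ ω, KLf i l ω ∂P := by
      intro l
      have hexp : (fun ω => Real.log (L l θ0 (ξ l i ω))
          - Real.log (∑ θ, μ i l θ ω * L l θ (ξ l i ω)))
          = fun ω => ∑ ζ, (if ξ l i ω = ζ then (1:ℝ) else 0) * (Real.log (L l θ0 ζ)
              - Real.log (∑ θ, μ i l θ ω * L l θ ζ)) := by
        funext ω
        have h1 : ∀ ζ : Z l, (if ξ l i ω = ζ then (1:ℝ) else 0) * (Real.log (L l θ0 ζ)
            - Real.log (∑ θ, μ i l θ ω * L l θ ζ)) = if ξ l i ω = ζ then (Real.log (L l θ0 ζ)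
            - Real.log (∑ θ, μ i l θ ω * L l θ ζ)) else 0 := by
          intro ζ; split <;> simp
        rw [Finset.sum_congr rfl (fun ζ _ => h1 ζ), Finset.sum_ite_eq]
        simp
      have hIndPair : ∀ ζ : Z l, IndepFun (fun ω => if ξ l i ω = ζ then (1:ℝ) else 0)
          (fun ω => Real.log (L l θ0 ζ) - Real.log (∑ θ, μ i l θ ω * L l θ ζ)) P := by
        intro ζ
        have h1 : (fun ω => Real.log (L l θ0 ζ) - Real.log (∑ θ, μ i l θ ω * L l θ ζ))
            = (fun x : (p : Fin N × Fin i) → Z p.1 => Real.log (L l θ0 ζ)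
                - Real.log (∑ θ, F x l θ * L l θ ζ)) ∘ (fun ω p => ξ p.1 p.2 ω) := by
          funext ω
          simp only [Function.comp_apply]
          congr 2
          exact Finset.sum_congr rfl (fun θ _ => by rw [hF l θ ω])
        have h2 : (fun ω => if ξ l i ω = ζ then (1:ℝ) else 0)
            = (fun z : Z l => if z = ζ then (1:ℝ) else 0) ∘ (ξ l i) := rfl
        rw [h1, h2]
        exact (hInd i l).comp (measurable_of_finite _) (measurable_of_finite _)
      have hEind : ∀ ζ : Z l, ∫ ω, (if ξ l i ω = ζ then (1:ℝ) else 0) ∂P = L l θ0 ζ := by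
        intro ζ
        have h5 : (fun ω => if ξ l i ω = ζ then (1:ℝ) else 0)
            = (ξ l i ⁻¹' {ζ}).indicator (fun _ => (1:ℝ)) := by
          funext ω
          rw [Set.indicator_apply]
          simp [Set.mem_preimage]
        rw [h5, integral_indicator_const _ (hmeas l i (measurableSet_singleton ζ)), measureReal_def, hlaw l i ζ,
          ENNReal.toReal_ofReal (hLpos l θ0 ζ).le, smul_eq_mul, mul_one]
      have hmul : ∀ ζ : Z l, ∫ ω, (if ξ l i ω = ζ then (1:ℝ) else 0) * (Real.log (L l θ0 ζ)
          - Real.log (∑ θ, μ i l θ ω * L l θ ζ)) ∂P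
          = L l θ0 ζ * ∫ ω, (Real.log (L l θ0 ζ)
              - Real.log (∑ θ, μ i l θ ω * L l θ ζ)) ∂P := by
        intro ζ
        have h3 : ∫ ω, ((fun ω => if ξ l i ω = ζ then (1:ℝ) else 0) * (fun ω =>
            Real.log (L l θ0 ζ) - Real.log (∑ θ, μ i l θ ω * L l θ ζ))) ω ∂P
            = (∫ ω, (if ξ l i ω = ζ then (1:ℝ) else 0) ∂P) * ∫ ω, (Real.log (L l θ0 ζ)
              - Real.log (∑ θ, μ i l θ ω * L l θ ζ)) ∂P :=
          (hIndPair ζ).integral_mul_eq_mul_integral (hindint l ζ).aestronglyMeasurable (hHint l ζ).aestronglyMeasurable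
        calc ∫ ω, (if ξ l i ω = ζ then (1:ℝ) else 0) * (Real.log (L l θ0 ζ)
            - Real.log (∑ θ, μ i l θ ω * L l θ ζ)) ∂P
            = (∫ ω, (if ξ l i ω = ζ then (1:ℝ) else 0) ∂P) * ∫ ω, (Real.log (L l θ0 ζ)
              - Real.log (∑ θ, μ i l θ ω * L l θ ζ)) ∂P := by
              simpa only [Pi.mul_apply] using h3
          _ = L l θ0 ζ * ∫ ω, (Real.log (L l θ0 ζ)
              - Real.log (∑ θ, μ i l θ ω * L l θ ζ)) ∂P := by rw [hEind ζ]
      calc ∫ ω, (Real.log (L l θ0 (ξ l i ω))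
            - Real.log (∑ θ, μ i l θ ω * L l θ (ξ l i ω))) ∂P
          = ∫ ω, ∑ ζ, (if ξ l i ω = ζ then (1:ℝ) else 0) * (Real.log (L l θ0 ζ)
              - Real.log (∑ θ, μ i l θ ω * L l θ ζ)) ∂P := by rw [hexp]
        _ = ∑ ζ, ∫ ω, (if ξ l i ω = ζ then (1:ℝ) else 0) * (Real.log (L l θ0 ζ)
              - Real.log (∑ θ, μ i l θ ω * L l θ ζ)) ∂P :=
            integral_finset_sum _ (fun ζ _ => hprodint l ζ)
        _ = ∑ ζ, L l θ0 ζ * ∫ ω, (Real.log (L l θ0 ζ)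
              - Real.log (∑ θ, μ i l θ ω * L l θ ζ)) ∂P :=
            Finset.sum_congr rfl (fun ζ _ => hmul ζ)
        _ = ∑ ζ, ∫ ω, L l θ0 ζ * (Real.log (L l θ0 ζ)
              - Real.log (∑ θ, μ i l θ ω * L l θ ζ)) ∂P :=
            Finset.sum_congr rfl (fun ζ _ => (integral_const_mul _ _).symm)
        _ = ∫ ω, ∑ ζ, L l θ0 ζ * (Real.log (L l θ0 ζ)
              - Real.log (∑ θ, μ i l θ ω * L l θ ζ)) ∂P :=
            (integral_finset_sum _ (fun ζ _ => ((hHint l ζ).const_mul _))).symm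
        _ = ∫ ω, KLf i l ω ∂P := by
            apply integral_congr_ae
            apply Filter.Eventually.of_forall
            intro ω
            refine (Finset.sum_congr rfl (fun ζ _ => ?_)).symm
            rw [Real.log_div (hLpos l θ0 ζ).ne' (hm_pos i l ζ ω).ne']
    calc ∫ ω, X i ω ∂P
        = ∑ l, ∫ ω, v l * (γ l i * (Real.log (L l θ0 (ξ l i ω))
            - Real.log (∑ θ, μ i l θ ω * L l θ (ξ l i ω)))) ∂P :=
          integral_finset_sum _ (fun l _ => aux_int_bdd P (hXterm_meas i l) (hXterm_bd i l))
      _ = ∑ l, v l * (γ l i * ∫ ω, (Real.log (L l θ0 (ξ l i ω))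
            - Real.log (∑ θ, μ i l θ ω * L l θ (ξ l i ω))) ∂P) := by
          refine Finset.sum_congr rfl (fun l _ => ?_)
          rw [integral_const_mul, integral_const_mul]
      _ = ∑ l, v l * (γ l i * ∫ ω, KLf i l ω ∂P) :=
          Finset.sum_congr rfl (fun l _ => by rw [hterm l])
      _ = ∑ l, ∫ ω, v l * (γ l i * KLf i l ω) ∂P := by
          refine Finset.sum_congr rfl (fun l _ => ?_)
          rw [integral_const_mul, integral_const_mul]
      _ = ∫ ω, G i ω ∂P :=
          (integral_finset_sum _ (fun l _ => aux_int_bdd P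
            (((hKLmeas i l).const_mul _).const_mul _) (hGterm_bd i l))).symm
  -- summability of the expected KL divergences
  have hsum_int : ∀ I : ℕ, ∑ j ∈ Finset.range I, ∫ ω, G (n+j) ω ∂P ≤ C0 := by
    intro I
    have h1 : ∑ j ∈ Finset.range I, ∫ ω, G (n+j) ω ∂P
        = ∫ ω, ∑ j ∈ Finset.range I, X (n+j) ω ∂P := by
      rw [integral_finset_sum _ (fun j _ => hXint (n+j))]
      exact Finset.sum_congr rfl (fun j _ => (hEX (n+j)).symm)
    rw [h1]
    calc ∫ ω, ∑ j ∈ Finset.range I, X (n+j) ω ∂P ≤ ∫ (_ : Ω), C0 ∂P :=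
        integral_mono (integrable_finset_sum _ (fun j _ => hXint (n+j)))
          (integrable_const _) (fun ω => htel2 I ω)
      _ = C0 := by simp
  have hC0nn : 0 ≤ C0 := le_trans (integral_nonneg (hGnn n))
    (by simpa using hsum_int 1)
  have hts : ∑' (j : ℕ), ENNReal.ofReal (∫ ω, G (n+j) ω ∂P) ≤ ENNReal.ofReal C0 := by
    rw [ENNReal.tsum_eq_iSup_nat]
    apply iSup_le
    intro I
    rw [← ENNReal.ofReal_sum_of_nonneg (fun j _ => integral_nonneg (hGnn (n+j)))]
    exact ENNReal.ofReal_le_ofReal (hsum_int I)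
  have hlint : ∫⁻ ω, ∑' j : ℕ, ENNReal.ofReal (G (n+j) ω) ∂P ≠ ⊤ := by
    rw [lintegral_tsum (fun j => ((hGmeas (n+j)).ennreal_ofReal).aemeasurable)]
    have h2 : ∀ j : ℕ, ∫⁻ ω, ENNReal.ofReal (G (n+j) ω) ∂P
        = ENNReal.ofReal (∫ ω, G (n+j) ω ∂P) := fun j =>
      (ofReal_integral_eq_lintegral_ofReal (hGint (n+j))
        (Filter.Eventually.of_forall (hGnn (n+j)))).symm
    rw [tsum_congr h2]
    exact ne_top_of_le_ne_top ENNReal.ofReal_ne_top hts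
  have hae := ae_lt_top (Measurable.ennreal_tsum
    (fun j => (hGmeas (n+j)).ennreal_ofReal)) hlint
  -- conclusion, pointwise on the good event
  filter_upwards [hae] with ω hω
  have h0 : Tendsto (fun j => ENNReal.ofReal (G (n+j) ω)) atTop (nhds 0) :=
    ENNReal.tendsto_atTop_zero_of_tsum_ne_top hω.ne
  have hGshift : Tendsto (fun j => G (n+j) ω) atTop (nhds 0) := by
    have h1 := (ENNReal.tendsto_toReal (by simp : (0:ENNReal) ≠ ⊤)).comp h0
    simp only [ENNReal.toReal_zero] at h1
    refine h1.congr (fun j => ?_)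
    simp only [Function.comp_apply]
    exact ENNReal.toReal_ofReal (hGnn (n+j) ω)
  have hGall : Tendsto (fun i => G i ω) atTop (nhds 0) := by
    have h1 : Tendsto (fun j => G (j + n) ω) atTop (nhds 0) := by
      refine hGshift.congr (fun j => ?_)
      rw [Nat.add_comm]
    exact (tendsto_add_atTop_iff_nat n).1 h1
  -- eventually γ is bounded below
  have hbdd : IsBoundedUnder (· ≥ ·) atTop (fun i => γ k0 i) :=
    isBoundedUnder_of ⟨0, fun i => (hγ01 k0 i).1⟩
  have hγev : ∀ᶠ i in atTop, liminf (fun i => γ k0 i) atTop / 2 < γ k0 i :=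
    eventually_lt_of_lt_liminf (by linarith [hγliminf k0]) hbdd
  set lγ : ℝ := liminf (fun i => γ k0 i) atTop with hlγ_def
  have hlγpos : 0 < lγ := hγliminf k0
  have hc2 : 0 < v k0 * (lγ/2) := mul_pos (hvpos k0) (by linarith)
  have hKLtend : Tendsto (fun i => KLf i k0 ω) atTop (nhds 0) := by
    apply tendsto_of_tendsto_of_tendsto_of_le_of_le'
      (tendsto_const_nhds : Tendsto (fun _ : ℕ => (0:ℝ)) atTop (nhds 0))
      (show Tendsto (fun i => G i ω / (v k0 * (lγ/2))) atTop (nhds 0) by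
        simpa using hGall.div_const (v k0 * (lγ/2)))
    · exact Filter.Eventually.of_forall (fun i => hKL_nonneg i k0 ω)
    · filter_upwards [hγev] with i hi
      rw [le_div_iff₀ hc2]
      have h1 : v k0 * (γ k0 i * KLf i k0 ω) ≤ G i ω :=
        Finset.single_le_sum (f := fun l => v l * (γ l i * KLf i l ω))
          (fun l _ => mul_nonneg (hvpos l).le
            (mul_nonneg (hγ01 l i).1 (hKL_nonneg i l ω))) (Finset.mem_univ k0)
      have h2 : KLf i k0 ω * (v k0 * (lγ/2)) ≤ v k0 * (γ k0 i * KLf i k0 ω) := by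
        have h4 : KLf i k0 ω * (v k0 * (lγ/2)) = v k0 * ((lγ/2) * KLf i k0 ω) := by ring
        rw [h4]
        exact mul_le_mul_of_nonneg_left
          (mul_le_mul_of_nonneg_right hi.le (hKL_nonneg i k0 ω)) (hvpos k0).le
      linarith
  have hsqtend : Tendsto (fun i => (∑ θ, μ i k0 θ ω * L k0 θ ζ0 - L k0 θ0 ζ0)^2)
      atTop (nhds 0) := by
    apply tendsto_of_tendsto_of_tendsto_of_le_of_le'
      (tendsto_const_nhds : Tendsto (fun _ : ℕ => (0:ℝ)) atTop (nhds 0))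
      (show Tendsto (fun i => 2 * KLf i k0 ω) atTop (nhds 0) by
        simpa using hKLtend.const_mul 2)
    · exact Filter.Eventually.of_forall (fun i => sq_nonneg _)
    · exact Filter.Eventually.of_forall (fun i => by linarith [hKL_sq i k0 ω ζ0])
  have habstend : Tendsto (fun i => |∑ θ, μ i k0 θ ω * L k0 θ ζ0 - L k0 θ0 ζ0|)
      atTop (nhds 0) := by
    have h1 := (Real.continuous_sqrt.tendsto 0).comp hsqtend
    simp only [Real.sqrt_zero] at h1
    refine h1.congr (fun i => ?_)
    simp only [Function.comp_apply]
    exact Real.sqrt_sq_eq_abs _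
  rw [tendsto_iff_dist_tendsto_zero]
  simpa [Real.dist_eq] using habstend
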